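/- arXiv:1603.04502 — 2 statements merged into one kernel-verified Lean document; each statement's English description precedes it below -/
import Mathlib

section
/- Let ε > 0, let E : ℝ × ℝ² → ℝ² be any map, and let f : ℝ × ℝ² × ℝ² → ℝ be differentiable. Assume that for all (t, x, v), ∂_t f(t,x,v) + (v/ε) · ∇_x f(t,x,v) + (E(t,x)/ε + v^⊥/ε²) · ∇_v f(t,x,v) = 0. Define f̄(t,x,v) = f(t, x − ε v^⊥, v). Then for all (t,x,v), ∂_t f̄(t,x,v) + (E(t, x − ε v^⊥))^⊥ · ∇_x f̄(t,x,v) + (v^⊥/ε² + E(t, x − ε v^⊥)/ε) · ∇_v f̄(t,x,v) = 0. -/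
noncomputable abbrev R2 : Type := EuclideanSpace ℝ (Fin 2)

/-- For `w = (w₁, w₂) ∈ ℝ²`, `perp w = (−w₂, w₁)`. -/
noncomputable def perp (w : R2) : R2 := WithLp.toLp 2 ![-w 1, w 0]

lemma perp_add (a b : R2) : perp (a + b) = perp a + perp b := by
  ext i; fin_cases i <;> simp [perp] <;> ring

lemma perp_smul (c : ℝ) (a : R2) : perp (c • a) = c • perp a := by
  ext i; fin_cases i <;> simp [perp]

lemma perp_perp (a : R2) : perp (perp a) = -a := by
  ext i; fin_cases i <;> simp [perp]

noncomputable def perpL : R2 →L[ℝ] R2 :=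
  LinearMap.toContinuousLinearMap
    { toFun := perp
      map_add' := perp_add
      map_smul' := perp_smul }

lemma perpL_apply (a : R2) : perpL a = perp a := rfl

noncomputable def gyroL (ε : ℝ) : (ℝ × R2 × R2) →L[ℝ] (ℝ × R2 × R2) :=
  (ContinuousLinearMap.fst ℝ ℝ (R2 × R2)).prod
    ((((ContinuousLinearMap.fst ℝ R2 R2).comp (ContinuousLinearMap.snd ℝ ℝ (R2 × R2)))
      - ε • (perpL.comp ((ContinuousLinearMap.snd ℝ R2 R2).comp
          (ContinuousLinearMap.snd ℝ ℝ (R2 × R2))))).prod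
      ((ContinuousLinearMap.snd ℝ R2 R2).comp (ContinuousLinearMap.snd ℝ ℝ (R2 × R2))))

lemma gyroL_apply (ε : ℝ) (p : ℝ × R2 × R2) :
    gyroL ε p = (p.1, p.2.1 - ε • perp p.2.2, p.2.2) := rfl

/-- If `f` is a differentiable solution of the Vlasov equation
`∂_t f + (v/ε)·∇_x f + (E(t,x)/ε + v^⊥/ε²)·∇_v f = 0`, then the gyro-density
`f̄(t,x,v) = f(t, x − ε v^⊥, v)` satisfies
`∂_t f̄ + (E(t, x − εv^⊥))^⊥·∇_x f̄ + (v^⊥/ε² + E(t, x − εv^⊥)/ε)·∇_v f̄ = 0`. -/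
theorem vlasov_gyro_coordinates (ε : ℝ) (hε : 0 < ε)
    (E : ℝ × R2 → R2) (f : ℝ × R2 × R2 → ℝ) (hf : Differentiable ℝ f)
    (hPDE : ∀ t x v, fderiv ℝ f (t, x, v)
      (1, ε⁻¹ • v, ε⁻¹ • E (t, x) + (ε ^ 2)⁻¹ • perp v) = 0) :
    ∀ t x v,
      fderiv ℝ (fun p : ℝ × R2 × R2 => f (p.1, p.2.1 - ε • perp p.2.2, p.2.2)) (t, x, v)
        (1, perp (E (t, x - ε • perp v)),
          (ε ^ 2)⁻¹ • perp v + ε⁻¹ • E (t, x - ε • perp v)) = 0 := by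
  intro t x v
  set p : ℝ × R2 × R2 := (t, x, v)
  have hg : HasFDerivAt (fun p : ℝ × R2 × R2 => f (p.1, p.2.1 - ε • perp p.2.2, p.2.2))
      ((fderiv ℝ f (gyroL ε p)).comp (gyroL ε)) p := by
    have h1 : HasFDerivAt f (fderiv ℝ f (gyroL ε p)) (gyroL ε p) :=
      (hf (gyroL ε p)).hasFDerivAt
    have h2 : HasFDerivAt (gyroL ε) (gyroL ε) p := (gyroL ε).hasFDerivAt
    have := h1.comp p h2
    exact this
  rw [hg.fderiv]
  set u : ℝ × R2 × R2 := (1, perp (E (t, x - ε • perp v)),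
      (ε ^ 2)⁻¹ • perp v + ε⁻¹ • E (t, x - ε • perp v))
  have hLu : gyroL ε u = (1, ε⁻¹ • v,
      ε⁻¹ • E (t, x - ε • perp v) + (ε ^ 2)⁻¹ • perp v) := by
    rw [gyroL_apply]
    have : perp ((ε ^ 2)⁻¹ • perp v + ε⁻¹ • E (t, x - ε • perp v))
        = (ε ^ 2)⁻¹ • (-v) + ε⁻¹ • perp (E (t, x - ε • perp v)) := by
      rw [perp_add, perp_smul, perp_smul, perp_perp]
    simp only [u, this]
    refine Prod.ext rfl (Prod.ext ?_ (add_comm _ _))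
    have hε2 : ε * (ε ^ 2)⁻¹ = ε⁻¹ := by
      field_simp
    have hε1 : ε * ε⁻¹ = 1 := mul_inv_cancel₀ hε.ne'
    simp only [smul_add, smul_smul, hε2, hε1, one_smul, smul_neg]
    abel
  have hgp : gyroL ε p = (t, x - ε • perp v, v) := rfl
  rw [ContinuousLinearMap.comp_apply, hLu, hgp]
  exact hPDE t (x - ε • perp v) v
end

section
/- Let ρ : ℝ² → [0,∞) be measurable, bounded, integrable and compactly supported, and define E(x) = ∫_{ℝ²} ((x−y)/|x−y|²) ρ(y) dy. Then ∫_{ℝ²} ρ(x) E(x) · x^⊥ dx = 0. -/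
open MeasureTheory
open scoped RealInnerProductSpace

open Metric Set Real

lemma perp_sub (x y : R2) : perp (x - y) = perp x - perp y := by
  ext i
  fin_cases i <;> simp [perp, PiLp.sub_apply] <;> ring

lemma inner_perp (w : R2) : ⟪perp w, w⟫ = 0 := by
  simp [perp, PiLp.inner_apply, Fin.sum_univ_two, RCLike.inner_apply, conj_trivial]
  ring

lemma norm_perp (w : R2) : ‖perp w‖ = ‖w‖ := by
  simp [perp, EuclideanSpace.norm_eq, Fin.sum_univ_two]
  ring_nf

lemma measurable_perp : Measurable perp := by
  have h0 : Measurable fun w : R2 => w 0 :=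
    (measurable_pi_apply 0).comp ((MeasurableEquiv.toLp 2 (Fin 2 → ℝ)).symm).measurable
  have h1 : Measurable fun w : R2 => w 1 :=
    (measurable_pi_apply 1).comp ((MeasurableEquiv.toLp 2 (Fin 2 → ℝ)).symm).measurable
  have hfun : Measurable fun w : R2 => (![-w 1, w 0] : Fin 2 → ℝ) := by
    apply measurable_pi_lambda
    intro i
    fin_cases i
    · simpa using h1
    · simpa using h0
  exact (((MeasurableEquiv.toLp 2 (Fin 2 → ℝ)).symm).symm.measurable).comp hfun

/-- the 1D kernel piece: `g1 t = |t|^(-1/2)` cut off to `0 < |t| ≤ 1`. -/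
noncomputable def g1 : ℝ → ℝ := fun t => (Ioc (0:ℝ) 1).indicator (fun s => s ^ (-(1/2) : ℝ)) |t|

lemma g1_nonneg (t : ℝ) : 0 ≤ g1 t := by
  unfold g1
  apply Set.indicator_nonneg
  intro s hs
  exact Real.rpow_nonneg hs.1.le _

lemma g1_integrable : Integrable g1 := by
  have hIoc : IntegrableOn (fun s : ℝ => s ^ (-(1/2) : ℝ)) (Ioc 0 1) := by
    have := intervalIntegral.intervalIntegrable_rpow' (a := 0) (b := 1) (r := -(1/2))
      (by norm_num)
    rwa [intervalIntegrable_iff, uIoc_of_le zero_le_one] at this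
  have hind : Integrable ((Ioc (0:ℝ) 1).indicator (fun s => s ^ (-(1/2) : ℝ))) := by
    rwa [integrable_indicator_iff measurableSet_Ioc]
  have h1 : IntegrableOn g1 (Ioi (0:ℝ)) := by
    apply (hind.integrableOn).congr_fun ?_ measurableSet_Ioi
    intro x hx; simp [g1, abs_of_pos (mem_Ioi.mp hx)]
  have h2 : IntegrableOn g1 (Iic (0:ℝ)) := by
    rw [← Measure.map_neg_eq_self (volume : Measure ℝ)]
    have m : MeasurableEmbedding fun x : ℝ => -x := (Homeomorph.neg ℝ).measurableEmbedding
    rw [m.integrableOn_map_iff]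
    have : (g1 ∘ fun x : ℝ => -x) = g1 := by
      funext x; simp [g1, Function.comp, abs_neg]
    rw [this]
    simp only [neg_preimage, neg_Iic, neg_zero]
    exact (integrableOn_Ici_iff_integrableOn_Ioi).mpr h1
  have := h2.union h1
  rwa [Iic_union_Ioi, integrableOn_univ] at this

lemma h2_integrable : Integrable (fun y : R2 => g1 (y 0) * g1 (y 1)) := by
  have hpi : Integrable (fun x : Fin 2 → ℝ => ∏ i, g1 (x i)) :=
    Integrable.fintype_prod (f := fun _ : Fin 2 => g1) (fun _ => g1_integrable)
  have hmp := EuclideanSpace.volume_preserving_symm_measurableEquiv_toLp (Fin 2)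
  have := (hmp.integrable_comp_emb
    ((MeasurableEquiv.toLp 2 (Fin 2 → ℝ)).symm).measurableEmbedding).mpr hpi
  have heq : ((fun x : Fin 2 → ℝ => ∏ i, g1 (x i)) ∘ ((MeasurableEquiv.toLp 2 (Fin 2 → ℝ)).symm))
      = fun y : R2 => g1 (y 0) * g1 (y 1) := by
    funext y
    simp [Fin.prod_univ_two, MeasurableEquiv.coe_toLp_symm]
  rwa [heq] at this

lemma coord_null (i : Fin 2) : (volume : Measure R2) {y : R2 | y i = 0} = 0 := by
  have : {y : R2 | y i = 0} = (LinearMap.ker (EuclideanSpace.projₗ (𝕜 := ℝ) i) : Set R2) := by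
    ext y; simp [LinearMap.mem_ker]
  rw [this]
  apply Measure.addHaar_submodule
  intro h
  have : (EuclideanSpace.single i (1:ℝ) : R2) ∈
      LinearMap.ker (EuclideanSpace.projₗ (𝕜 := ℝ) i) := by
    rw [h]; trivial
  simp [LinearMap.mem_ker] at this

lemma coord_abs_le_norm (z : R2) (i : Fin 2) : |z i| ≤ ‖z‖ := by
  have h : ‖z‖ = Real.sqrt ((z 0) ^ 2 + (z 1) ^ 2) := by
    simp [EuclideanSpace.norm_eq, Fin.sum_univ_two, Real.norm_eq_abs, sq_abs]
  fin_cases i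
  · show |z 0| ≤ ‖z‖
    rw [h, ← Real.sqrt_sq_eq_abs]
    apply Real.sqrt_le_sqrt
    nlinarith [sq_nonneg (z 1)]
  · show |z 1| ≤ ‖z‖
    rw [h, ← Real.sqrt_sq_eq_abs]
    apply Real.sqrt_le_sqrt
    nlinarith [sq_nonneg (z 0)]

lemma kernel_pointwise {z : R2} (h0 : z 0 ≠ 0) (h1 : z 1 ≠ 0) (hz : ‖z‖ < 1) :
    ‖z‖⁻¹ ≤ g1 (z 0) * g1 (z 1) := by
  set a := |z 0| with ha'
  set b := |z 1| with hb'
  have ha : 0 < a := abs_pos.mpr h0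
  have hb : 0 < b := abs_pos.mpr h1
  have haI : a ∈ Ioc (0:ℝ) 1 := ⟨ha, le_of_lt (lt_of_le_of_lt (coord_abs_le_norm z 0) hz)⟩
  have hbI : b ∈ Ioc (0:ℝ) 1 := ⟨hb, le_of_lt (lt_of_le_of_lt (coord_abs_le_norm z 1) hz)⟩
  have hg0 : g1 (z 0) = a ^ (-(1/2) : ℝ) := by
    simp [g1, ← ha', indicator_of_mem haI]
  have hg1 : g1 (z 1) = b ^ (-(1/2) : ℝ) := by
    simp [g1, ← hb', indicator_of_mem hbI]
  rw [hg0, hg1, ← Real.mul_rpow ha.le hb.le]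
  have hnorm : ‖z‖ = Real.sqrt ((z 0) ^ 2 + (z 1) ^ 2) := by
    simp [EuclideanSpace.norm_eq, Fin.sum_univ_two, Real.norm_eq_abs, sq_abs]
  have hge : Real.sqrt (a * b) ≤ ‖z‖ := by
    rw [hnorm]
    apply Real.sqrt_le_sqrt
    nlinarith [sq_abs (z 0), sq_abs (z 1), sq_nonneg (a - b)]
  have hsq : Real.sqrt (a * b) = (a * b) ^ ((1:ℝ)/2) := Real.sqrt_eq_rpow _
  have hpos : (0:ℝ) < (a * b) ^ ((1:ℝ)/2) := Real.rpow_pos_of_pos (mul_pos ha hb) _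
  calc ‖z‖⁻¹ ≤ ((a * b) ^ ((1:ℝ)/2))⁻¹ := by
        apply inv_anti₀ hpos
        rw [← hsq]; exact hge
    _ = (a * b) ^ (-(1/2) : ℝ) := by
        rw [← Real.rpow_neg (mul_nonneg ha.le hb.le)]

lemma kernel_integrableOn : IntegrableOn (fun z : R2 => ‖z‖⁻¹) (ball (0:R2) 1) := by
  have h0 : ∀ᵐ z : R2, z 0 ≠ 0 := by
    rw [ae_iff]; simpa using coord_null 0
  have h1 : ∀ᵐ z : R2, z 1 ≠ 0 := by
    rw [ae_iff]; simpa using coord_null 1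
  apply Integrable.mono' (h2_integrable.integrableOn)
  · exact (measurable_norm.inv).aestronglyMeasurable
  · filter_upwards [ae_restrict_mem measurableSet_ball,
      h0.filter_mono (ae_mono Measure.restrict_le_self),
      h1.filter_mono (ae_mono Measure.restrict_le_self)] with z hz hz0 hz1
    rw [mem_ball_zero_iff] at hz
    rw [Real.norm_eq_abs, abs_of_nonneg (inv_nonneg.mpr (norm_nonneg z))]
    exact kernel_pointwise hz0 hz1 hz

/-- The truncated 2D kernel. -/
noncomputable def G2 : R2 → ℝ := (ball (0:R2) 1).indicator (fun z => ‖z‖⁻¹)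

lemma G2_integrable : Integrable G2 := by
  unfold G2
  rw [integrable_indicator_iff measurableSet_ball]
  exact kernel_integrableOn

lemma G2_nonneg (z : R2) : 0 ≤ G2 z :=
  Set.indicator_nonneg (fun s _ => inv_nonneg.mpr (norm_nonneg s)) z

lemma G2_neg (z : R2) : G2 (-z) = G2 z := by
  by_cases h : z ∈ ball (0:R2) 1
  · have h' : -z ∈ ball (0:R2) 1 := by rwa [mem_ball_zero_iff, norm_neg, ← mem_ball_zero_iff]
    simp [G2, indicator_of_mem h, indicator_of_mem h', norm_neg]
  · have h' : -z ∉ ball (0:R2) 1 := by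
      rwa [mem_ball_zero_iff, norm_neg, ← mem_ball_zero_iff]
    simp [G2, indicator_of_notMem h, indicator_of_notMem h']

/-- For a nonnegative, measurable, bounded, integrable and compactly supported `ρ` with
field `E(x) = ∫ ((x−y)/|x−y|²) ρ(y) dy`, one has `∫ ρ(x) E(x)·x^⊥ dx = 0`. -/
theorem field_moment_vanishes (ρ : R2 → ℝ) (hmeas : Measurable ρ) (hpos : ∀ x, 0 ≤ ρ x)
    (M : ℝ) (hbdd : ∀ x, ρ x ≤ M) (hint : Integrable ρ) (hsupp : HasCompactSupport ρ)
    (E : R2 → R2) (hE : ∀ x, E x = ∫ y, (‖x - y‖ ^ 2)⁻¹ • ρ y • (x - y)) :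
    ∫ x, ρ x * ⟪E x, perp x⟫ = 0 := by
  have hM : 0 ≤ M := le_trans (hpos 0) (hbdd 0)
  -- key scalar bound
  have hkey : ∀ x y : R2, ρ y * ‖x - y‖⁻¹ ≤ M * G2 (x - y) + ρ y := by
    intro x y
    by_cases h : x - y ∈ ball (0:R2) 1
    · have hG : G2 (x - y) = ‖x - y‖⁻¹ := indicator_of_mem h _
      rw [hG]
      have : ρ y * ‖x - y‖⁻¹ ≤ M * ‖x - y‖⁻¹ :=
        mul_le_mul_of_nonneg_right (hbdd y) (inv_nonneg.mpr (norm_nonneg _))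
      linarith [hpos y]
    · have hG : G2 (x - y) = 0 := indicator_of_notMem h _
      rw [hG, mul_zero, zero_add]
      rw [mem_ball_zero_iff, not_lt] at h
      calc ρ y * ‖x - y‖⁻¹ ≤ ρ y * 1 :=
            mul_le_mul_of_nonneg_left (inv_le_one_of_one_le₀ h) (hpos y)
        _ = ρ y := mul_one _
  -- integrability of the vector integrand, for each x
  have hvec : ∀ x : R2, Integrable (fun y : R2 => (‖x - y‖ ^ 2)⁻¹ • ρ y • (x - y)) := by
    intro x
    have hb : Integrable (fun y : R2 => M * G2 (x - y) + ρ y) :=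
      ((G2_integrable.comp_sub_left x).const_mul M).add hint
    apply Integrable.mono' hb
    · apply Measurable.aestronglyMeasurable
      fun_prop
    · refine Filter.Eventually.of_forall fun y => ?_
      have hnn : ‖(‖x - y‖ ^ 2)⁻¹ • ρ y • (x - y)‖ = ρ y * ‖x - y‖⁻¹ := by
        rcases eq_or_ne x y with rfl | hxy
        · simp
        · have hn : ‖x - y‖ ≠ 0 := by
            simp [sub_eq_zero, hxy]
          rw [norm_smul, norm_smul, Real.norm_eq_abs, Real.norm_eq_abs,
            abs_of_nonneg (inv_nonneg.mpr (by positivity)), abs_of_nonneg (hpos y)]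
          field_simp
      rw [hnn]
      exact hkey x y
  -- the scalar kernel
  set F : R2 → R2 → ℝ :=
    fun x y => ρ x * ⟪perp x, (‖x - y‖ ^ 2)⁻¹ • ρ y • (x - y)⟫ with hF
  -- pointwise reduction of the integrand
  have hpt : ∀ x : R2, ρ x * ⟪E x, perp x⟫ = ∫ y, F x y := by
    intro x
    rw [hE x, real_inner_comm, (integral_inner (hvec x) (perp x)).symm, ← integral_const_mul]
  -- compact support bound
  obtain ⟨R₀, hR₀⟩ := hsupp.isCompact.isBounded.subset_closedBall 0
  set R := max R₀ 0 with hRdef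
  have hRsupp : ∀ x : R2, ρ x * ‖x‖ ≤ R * ρ x := by
    intro x
    by_cases h : ρ x = 0
    · simp [h]
    · have hx : x ∈ tsupport ρ := subset_closure (by simpa [Function.mem_support] using h)
      have : ‖x‖ ≤ R := le_trans (by simpa using hR₀ hx) (le_max_left _ _)
      calc ρ x * ‖x‖ ≤ ρ x * R := mul_le_mul_of_nonneg_left this (hpos x)
        _ = R * ρ x := mul_comm _ _
  -- product integrability
  have hF_int : Integrable (fun p : R2 × R2 => F p.1 p.2)
      ((volume : Measure R2).prod volume) := by
    have hb1 : Integrable (fun p : R2 × R2 => ρ p.1 * G2 (p.1 - p.2))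
        ((volume : Measure R2).prod volume) := by
      have h := (hint.convolution_integrand (ContinuousLinearMap.mul ℝ ℝ) G2_integrable).swap
      have heq : ((fun p : R2 × R2 => (ContinuousLinearMap.mul ℝ ℝ) (ρ p.2) (G2 (p.1 - p.2)))
          ∘ Prod.swap) = fun p : R2 × R2 => ρ p.1 * G2 (p.1 - p.2) := by
        funext p
        simp only [Function.comp_apply, Prod.fst_swap, Prod.snd_swap,
          ContinuousLinearMap.mul_apply']
        rw [show p.2 - p.1 = -(p.1 - p.2) from (neg_sub _ _).symm, G2_neg]
      rwa [heq] at h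
    have hb2 : Integrable (fun p : R2 × R2 => ρ p.1 * ρ p.2)
        ((volume : Measure R2).prod volume) := hint.mul_prod hint
    have hbound : Integrable (fun p : R2 × R2 =>
        (R * M) * (ρ p.1 * G2 (p.1 - p.2)) + R * (ρ p.1 * ρ p.2))
        ((volume : Measure R2).prod volume) :=
      (hb1.const_mul (R * M)).add (hb2.const_mul R)
    apply Integrable.mono' hbound
    · apply Measurable.aestronglyMeasurable
      apply Measurable.mul (hmeas.comp measurable_fst)
      apply Measurable.inner (measurable_perp.comp measurable_fst)
      fun_prop
    · refine Filter.Eventually.of_forall fun p => ?_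
      obtain ⟨x, y⟩ := p
      simp only [hF, Real.norm_eq_abs, abs_mul]
      have h1 : |⟪perp x, (‖x - y‖ ^ 2)⁻¹ • ρ y • (x - y)⟫| ≤
          ‖x‖ * (ρ y * ‖x - y‖⁻¹) := by
        calc |⟪perp x, (‖x - y‖ ^ 2)⁻¹ • ρ y • (x - y)⟫| ≤
            ‖perp x‖ * ‖(‖x - y‖ ^ 2)⁻¹ • ρ y • (x - y)‖ := abs_real_inner_le_norm _ _
          _ = ‖x‖ * (ρ y * ‖x - y‖⁻¹) := by
            rw [norm_perp]
            congr 1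
            rcases eq_or_ne x y with rfl | hxy
            · simp
            · have hn : ‖x - y‖ ≠ 0 := by simp [sub_eq_zero, hxy]
              rw [norm_smul, norm_smul, Real.norm_eq_abs, Real.norm_eq_abs,
                abs_of_nonneg (inv_nonneg.mpr (by positivity)), abs_of_nonneg (hpos y)]
              field_simp
      have h2 : |ρ x| = ρ x := abs_of_nonneg (hpos x)
      rw [h2]
      calc ρ x * |⟪perp x, (‖x - y‖ ^ 2)⁻¹ • ρ y • (x - y)⟫|
          ≤ ρ x * (‖x‖ * (ρ y * ‖x - y‖⁻¹)) :=
            mul_le_mul_of_nonneg_left h1 (hpos x)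
        _ = (ρ x * ‖x‖) * (ρ y * ‖x - y‖⁻¹) := by ring
        _ ≤ (R * ρ x) * (M * G2 (x - y) + ρ y) := by
            apply mul_le_mul (hRsupp x) (hkey x y)
            · exact mul_nonneg (hpos y) (inv_nonneg.mpr (norm_nonneg _))
            · have : 0 ≤ ρ x * ‖x‖ := mul_nonneg (hpos x) (norm_nonneg x)
              linarith [hRsupp x]
        _ = (R * M) * (ρ x * G2 (x - y)) + R * (ρ x * ρ y) := by ring
  -- antisymmetry
  have hskew : ∀ x y : R2, F y x = - F x y := by
    intro x y
    have h1 : ⟪perp x - perp y, x - y⟫ = 0 := by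
      rw [← perp_sub]; exact inner_perp _
    rw [inner_sub_left] at h1
    have hyx : y - x = -(x - y) := (neg_sub _ _).symm
    simp only [hF, real_inner_smul_right, hyx, inner_neg_right, norm_neg]
    linear_combination (ρ x * ρ y * (‖x - y‖ ^ 2)⁻¹) * h1
  -- conclusion
  have hmain : ∫ x, ρ x * ⟪E x, perp x⟫ =
      ∫ p, F p.1 p.2 ∂((volume : Measure R2).prod volume) := by
    rw [show (fun x => ρ x * ⟪E x, perp x⟫) = fun x => ∫ y, F x y from funext hpt]
    exact integral_integral hF_int
  have hswap := integral_prod_swap (fun p : R2 × R2 => F p.1 p.2)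
    (μ := (volume : Measure R2)) (ν := (volume : Measure R2))
  simp only [Prod.fst_swap, Prod.snd_swap] at hswap
  have : ∫ p, F p.2 p.1 ∂((volume : Measure R2).prod volume) =
      - ∫ p, F p.1 p.2 ∂((volume : Measure R2).prod volume) := by
    rw [← integral_neg]
    congr 1
    funext p
    exact hskew p.1 p.2
  rw [hmain]
  linarith [hswap, this, hmain]
end
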